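/- Let x₁,...,x_m, y₁,...,y_m be elements of a field, all nonzero, and define x'ᵢ, y'ᵢ by the relations x'ᵢ y'ᵢ = xᵢ yᵢ and x'ᵢ + y'_{i+1} = xᵢ + y_{i+1} (indices mod m). Then for the matrices A(x) with diagonal x₁,...,x_m, superdiagonal 1, and corner entry z, the relations x'ᵢy'ᵢ = xᵢyᵢ and x'ᵢ + y'_{i+1} = xᵢ + y_{i+1} for all i imply A(x')A(y') = A(x)A(y). -/
import Mathlib


set_option maxHeartbeats 1000000 in
/-- the entrywise relations `x'ᵢ y'ᵢ = xᵢ yᵢ` and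
`x'ᵢ + y'_{i+1} = xᵢ + y_{i+1}` (indices mod m) imply the matrix identity
`A(x')A(y') = A(x)A(y)`, where `A(x)` is the m×m matrix over `R[z]` with diagonal
`xᵢ`, superdiagonal `1` and corner entry `z = Polynomial.X`. -/
theorem stmt9 (m : ℕ) [NeZero m] (hm : 2 ≤ m) (R : Type*) [Field R]
    (x y x' y' : ZMod m → R)
    (hx : ∀ i, x i ≠ 0) (hy : ∀ i, y i ≠ 0)
    (hx' : ∀ i, x' i ≠ 0) (hy' : ∀ i, y' i ≠ 0)
    (A : (ZMod m → R) → Matrix (ZMod m) (ZMod m) (Polynomial R))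
    (hA : ∀ (u : ZMod m → R) (i j : ZMod m), A u i j =
      if i = j then Polynomial.C (u i)
      else if j = i + 1 then (if i = -1 then Polynomial.X else 1)
      else 0)
    (hprod : ∀ i, x' i * y' i = x i * y i)
    (hsum : ∀ i, x' i + y' (i + 1) = x i + y (i + 1)) :
    A x' * A y' = A x * A y := by
  haveI : Fact (1 < m) := ⟨hm⟩
  have h10 : ∀ i : ZMod m, i + 1 ≠ i := by
    intro i h
    have h1 : (1 : ZMod m) = 0 := by
      have := congrArg (fun t => t - i) h
      simpa using this
    exact one_ne_zero h1
  have hp : ∀ i, Polynomial.C (x' i) * Polynomial.C (y' i)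
      = Polynomial.C (x i) * (Polynomial.C (y i) : Polynomial R) := by
    intro i; rw [← map_mul, ← map_mul, hprod i]
  have hs : ∀ i, Polynomial.C (x' i) + Polynomial.C (y' (i + 1))
      = Polynomial.C (x i) + (Polynomial.C (y (i + 1)) : Polynomial R) := by
    intro i; rw [← map_add, ← map_add, hsum i]
  have hs2 : ∀ i, Polynomial.C (x' i) + Polynomial.C (y' (1 + i))
      = Polynomial.C (x i) + (Polynomial.C (y (1 + i)) : Polynomial R) := by
    intro i; rw [add_comm 1 i]; exact hs i
  have key : ∀ (u v : ZMod m → R) (i j : ZMod m),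
      (A u * A v) i j = Polynomial.C (u i) * A v i j
        + (if i = -1 then Polynomial.X else 1) * A v (i + 1) j := by
    intro u v i j
    rw [Matrix.mul_apply]
    have hterm : ∀ k, A u i k * A v k j =
        (if k = i then Polynomial.C (u i) * A v i j else 0)
        + (if k = i + 1 then (if i = -1 then Polynomial.X else 1) * A v (i + 1) j
            else 0) := by
      intro k
      rw [hA u i k]
      by_cases h1 : k = i
      · subst h1
        simp [Ne.symm (h10 k)]
      · by_cases h2 : k = i + 1
        · subst h2
          simp [Ne.symm (h10 i), (h10 i)]
        · simp [h1, Ne.symm h1, h2]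
    rw [Finset.sum_congr rfl (fun k _ => hterm k), Finset.sum_add_distrib]
    simp
  refine Matrix.ext fun i j => ?_
  rw [key, key]
  rw [hA y', hA y', hA y, hA y]
  simp only [show (i + 1 = j) = (j = i + 1) from propext ⟨Eq.symm, Eq.symm⟩]
  split_ifs <;>
    first
      | rfl
      | ring1
      | linear_combination hp i
      | linear_combination hs i
      | linear_combination Polynomial.X * hs i
      | linear_combination hs2 i
      | linear_combination Polynomial.X * hs2 i
      | linear_combination hp i + Polynomial.X * hs2 i
      | exact absurd ((‹i = j›.trans ‹j = i + 1›).symm) (h10 i)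
      | exact absurd (((‹j = i + 1›).symm.trans ‹j = i + 1 + 1›).symm) (h10 (i + 1))
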